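/- Trace Cauchy–Schwarz inequality with a split middle factor: For any N ∈ ℕ and any N×N complex matrices X, Y, Z, one has |⟨X·Y·Z⟩| ≤ (⟨X*·X·(Y·Y*)^{1/2}⟩ · ⟨Z·Z*·(Y*·Y)^{1/2}⟩)^{1/2}. -/

import Mathlib

open Matrix
open scoped ComplexOrder
open scoped MatrixOrder

noncomputable section
set_option linter.unusedSectionVars false
set_option linter.unusedTactic false
set_option maxHeartbeats 1000000

section Aux
variable {n : Type*} [Fintype n] [DecidableEq n]


lemma trace_mul_conjTranspose_re (P : Matrix n n ℂ) :
    (P * Pᴴ).trace.re = ∑ p : n × n, ‖P p.1 p.2‖ ^ 2 := by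
  rw [Matrix.trace, Complex.re_sum, Fintype.sum_prod_type]
  congr 1; ext i
  rw [Matrix.diag, Matrix.mul_apply, Complex.re_sum]
  congr 1; ext j
  rw [conjTranspose_apply]
  simp [Complex.mul_conj, Complex.normSq_eq_norm_sq, ← Complex.ofReal_pow, Complex.ofReal_re]

lemma trace_nonneg_re (P : Matrix n n ℂ) : 0 ≤ (P * Pᴴ).trace.re := by
  rw [trace_mul_conjTranspose_re]; positivity

lemma trace_cauchy_schwarz (P Q : Matrix n n ℂ) :
    ‖(P * Q).trace‖ ≤ Real.sqrt ((P * Pᴴ).trace.re * (Qᴴ * Q).trace.re) := by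
  let x : EuclideanSpace ℂ (n × n) := WithLp.toLp 2 (fun p : n × n => Pᴴ p.1 p.2)
  let y : EuclideanSpace ℂ (n × n) := WithLp.toLp 2 (fun p : n × n => Q p.1 p.2)
  have hinner : (inner ℂ x y : ℂ) = (P * Q).trace := by
    simp only [PiLp.inner_apply, RCLike.inner_apply, x, y, conjTranspose_apply,
      starRingEnd_self_apply]
    rw [Matrix.trace, Fintype.sum_prod_type, Finset.sum_comm]
    simp [Matrix.diag, Matrix.mul_apply]
    exact Finset.sum_congr rfl fun _ _ => Finset.sum_congr rfl fun _ _ => mul_comm _ _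
  have hx : ‖x‖ = Real.sqrt ((P * Pᴴ).trace.re) := by
    rw [EuclideanSpace.norm_eq, trace_mul_conjTranspose_re]
    congr 1
    simp only [Fintype.sum_prod_type]
    rw [Finset.sum_comm]
    simp [x, conjTranspose_apply]
  have hy : ‖y‖ = Real.sqrt ((Qᴴ * Q).trace.re) := by
    have h2 := trace_mul_conjTranspose_re Qᴴ
    rw [conjTranspose_conjTranspose] at h2
    rw [EuclideanSpace.norm_eq, h2]
    congr 1
    simp only [Fintype.sum_prod_type]
    rw [Finset.sum_comm]
    simp [y, conjTranspose_apply]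
  have h := norm_inner_le_norm (𝕜 := ℂ) x y
  rw [hinner, hx, hy] at h
  exact h.trans_eq (Real.sqrt_mul (trace_nonneg_re P) _).symm


lemma exists_factorization (Y : Matrix n n ℂ) :
    ∃ A B : Matrix n n ℂ, A * B = Y ∧
      A * Aᴴ = CFC.sqrt (Y * Yᴴ) ∧
      Bᴴ * B = CFC.sqrt (Yᴴ * Y) := by
  classical
  have hY := posSemidef_conjTranspose_mul_self Y
  set hH : (Yᴴ * Y).IsHermitian := hY.1 with hHdef
  set V : Matrix n n ℂ := (hH.eigenvectorUnitary : Matrix n n ℂ) with hVdef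
  set μ : n → ℝ := hH.eigenvalues with hμdef
  have hμ : ∀ i, 0 ≤ μ i := hY.eigenvalues_nonneg
  set t : n → ℝ := fun i => Real.sqrt (Real.sqrt (μ i)) with htdef
  set d : n → ℂ := fun i => ((t i)⁻¹ : ℝ) with hddef
  set s : n → ℂ := fun i => ((t i : ℝ) : ℂ) with hsdef
  set D : Matrix n n ℂ := diagonal (fun i => (μ i : ℂ)) with hDdef
  have hdstar : star d = d := by
    funext i; simp [hddef, Pi.star_apply, Complex.star_def, Complex.conj_ofReal]
  have hsstar : star s = s := by
    funext i; simp [hsdef, Pi.star_apply, Complex.star_def, Complex.conj_ofReal]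
  -- unitary facts
  have hVV : Vᴴ * V = 1 := by
    rw [← Matrix.star_eq_conjTranspose]
    exact_mod_cast Unitary.coe_star_mul_self hH.eigenvectorUnitary
  have hVV' : V * Vᴴ = 1 := by
    rw [← Matrix.star_eq_conjTranspose]
    exact_mod_cast Unitary.coe_mul_star_self hH.eigenvectorUnitary
  have hcan1 : ∀ M : Matrix n n ℂ, Vᴴ * (V * M) = M := by
    intro M; rw [← Matrix.mul_assoc, hVV, Matrix.one_mul]
  have hcan2 : ∀ M : Matrix n n ℂ, V * (Vᴴ * M) = M := by
    intro M; rw [← Matrix.mul_assoc, hVV', Matrix.one_mul]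
  have hdiag : Vᴴ * (Yᴴ * Y) * V = D := by
    rw [hH.spectral_theorem, Unitary.conjStarAlgAut_apply]
    show Vᴴ * (V * D * Vᴴ) * V = D
    simp only [Matrix.mul_assoc, hcan1, hVV, Matrix.mul_one]
  have hspec : ∀ M : Matrix n n ℂ, Yᴴ * (Y * M) = V * (D * (Vᴴ * M)) := by
    have h1 : Yᴴ * Y = V * D * Vᴴ := by
      rw [← hdiag]
      simp only [Matrix.mul_assoc, hcan2, hVV', Matrix.mul_one]
    intro M
    rw [← Matrix.mul_assoc, h1]
    simp only [Matrix.mul_assoc]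
  -- the key vanishing fact
  have hkey : ∀ c : n → ℂ, (∀ i, (μ i : ℂ) * c i = 0) → Y * V * diagonal c = 0 := by
    intro c hc
    rw [← Matrix.conjTranspose_mul_self_eq_zero]
    have h2 : (Y * V * diagonal c)ᴴ * (Y * V * diagonal c)
        = (diagonal c)ᴴ * (Vᴴ * (Yᴴ * Y) * V) * diagonal c := by
      simp only [Matrix.conjTranspose_mul, Matrix.mul_assoc]
    rw [h2, hdiag, hDdef, Matrix.diagonal_conjTranspose, diagonal_mul_diagonal,
      diagonal_mul_diagonal]
    ext i j
    by_cases h : i = j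
    · subst h
      simp only [Matrix.diagonal_apply_eq, Matrix.zero_apply, mul_assoc, hc i, mul_zero]
    · simp [Matrix.diagonal_apply_ne _ h]
  have hds : Y * V * diagonal (fun i => d i * s i) = Y * V := by
    have h0 : Y * V * diagonal (fun i => 1 - d i * s i) = 0 := by
      apply hkey
      intro i
      rcases eq_or_lt_of_le (hμ i) with h | h
      · rw [← h]; simp
      · have htpos : 0 < t i := Real.sqrt_pos.mpr (Real.sqrt_pos.mpr h)
        have hds1 : d i * s i = 1 := by
          rw [hddef, hsdef]
          rw [← Complex.ofReal_mul, inv_mul_cancel₀ (ne_of_gt htpos), Complex.ofReal_one]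
        rw [hds1, sub_self, mul_zero]
    have h1 : diagonal (fun i => d i * s i) = 1 - diagonal (fun i => 1 - d i * s i) := by
      rw [eq_sub_iff_add_eq, Matrix.diagonal_add, ← Matrix.diagonal_one]
      congr 1
      funext i
      ring
    rw [h1, Matrix.mul_sub, h0, sub_zero, Matrix.mul_one]
  have hAH : (Y * V * diagonal d * Vᴴ)ᴴ = V * diagonal d * Vᴴ * Yᴴ := by
    simp only [Matrix.conjTranspose_mul, Matrix.conjTranspose_conjTranspose,
      Matrix.diagonal_conjTranspose, hdstar, Matrix.mul_assoc]
  have hAA : (Y * V * diagonal d * Vᴴ) * (Y * V * diagonal d * Vᴴ)ᴴ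
      = Y * V * diagonal (fun i => d i * d i) * Vᴴ * Yᴴ := by
    rw [hAH]
    simp only [Matrix.mul_assoc, hcan1]
    rw [← Matrix.mul_assoc (diagonal d) (diagonal d), diagonal_mul_diagonal]
  refine ⟨Y * V * diagonal d * Vᴴ, V * diagonal s * Vᴴ, ?_, ?_, ?_⟩
  · -- A * B = Y
    calc Y * V * diagonal d * Vᴴ * (V * diagonal s * Vᴴ)
        = Y * V * (diagonal d * diagonal s) * Vᴴ := by
          simp only [Matrix.mul_assoc, hcan1]
      _ = Y * V * Vᴴ := by rw [diagonal_mul_diagonal, hds]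
      _ = Y := by rw [Matrix.mul_assoc, hVV', Matrix.mul_one]
  · -- A * Aᴴ = sqrt (Y * Yᴴ)
    refine Eq.symm (CFC.sqrt_unique ?_ (posSemidef_self_mul_conjTranspose _).nonneg)
    rw [hAA]
    simp only [Matrix.mul_assoc]
    rw [hspec]
    simp only [hcan1]
    rw [← Matrix.mul_assoc D (diagonal fun i => d i * d i), hDdef, diagonal_mul_diagonal,
      ← Matrix.mul_assoc (diagonal fun i => d i * d i), diagonal_mul_diagonal]
    have hfun : (fun i => d i * d i * ((μ i : ℂ) * (d i * d i))) = fun i => d i * s i := by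
      funext i
      rcases eq_or_lt_of_le (hμ i) with h | h
      · have ht0 : t i = 0 := by rw [htdef]; simp [← h]
        simp [hddef, hsdef, ht0]
      · have htpos : 0 < t i := Real.sqrt_pos.mpr (Real.sqrt_pos.mpr h)
        have ht4 : (t i) ^ 4 = μ i := by
          have h1 : t i ^ 4 = (t i ^ 2) ^ 2 := by ring
          rw [h1, htdef]
          rw [Real.sq_sqrt (Real.sqrt_nonneg _), Real.sq_sqrt (hμ i)]
        rw [hddef, hsdef, ← ht4]
        push_cast
        field_simp
    rw [hfun]
    simp only [← Matrix.mul_assoc]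
    rw [hds]
    simp only [Matrix.mul_assoc]
    rw [hcan2]
  · -- Bᴴ * B = sqrt (Yᴴ * Y)
    have hBH : (V * diagonal s * Vᴴ)ᴴ = V * diagonal s * Vᴴ := by
      simp only [Matrix.conjTranspose_mul, Matrix.conjTranspose_conjTranspose,
        Matrix.diagonal_conjTranspose, hsstar, Matrix.mul_assoc]
    rw [hBH]
    have h2 : V * diagonal s * Vᴴ * (V * diagonal s * Vᴴ)
        = V * diagonal (fun i => s i * s i) * Vᴴ := by
      simp only [Matrix.mul_assoc, hcan1]
      rw [← Matrix.mul_assoc (diagonal s) (diagonal s), diagonal_mul_diagonal]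
    rw [h2]
    have hsq : CFC.sqrt (Yᴴ * Y)
        = V * diagonal (fun i => ((Real.sqrt (μ i) : ℝ) : ℂ)) * Vᴴ := by
      rw [CFC.sqrt_eq_real_sqrt _ hY.nonneg, cfcₙ_eq_cfc, hH.cfc_eq, IsHermitian.cfc,
        Unitary.conjStarAlgAut_apply]
      rfl
    rw [hsq]
    have hfun2 : (fun i => s i * s i) = fun i => ((Real.sqrt (μ i) : ℝ) : ℂ) := by
      funext i
      show ((t i : ℝ) : ℂ) * ((t i : ℝ) : ℂ) = _
      rw [← Complex.ofReal_mul]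
      norm_cast
      exact Real.mul_self_sqrt (Real.sqrt_nonneg _)
    rw [hfun2]

end Aux

/-- The normalized trace `⟨A⟩ := N⁻¹ Tr A`. -/
def ntr {N : ℕ} (A : Matrix (Fin N) (Fin N) ℂ) : ℂ :=
  (N : ℂ)⁻¹ * A.trace

/-- **Trace Cauchy–Schwarz inequality with a split middle factor.** -/
theorem trace_cauchy_schwarz_split_middle {N : ℕ} (X Y Z : Matrix (Fin N) (Fin N) ℂ) :
    ‖ntr (X * Y * Z)‖ ≤
      Real.sqrt ((ntr (Xᴴ * X * CFC.sqrt (Y * Yᴴ))).re *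
        (ntr (Z * Zᴴ * CFC.sqrt (Yᴴ * Y))).re) := by
  obtain ⟨A, B, hAB, hAA, hBB⟩ := exists_factorization Y
  set S := CFC.sqrt (Y * Yᴴ)
  set T := CFC.sqrt (Yᴴ * Y)
  have key : ‖(X * Y * Z).trace‖ ≤
      Real.sqrt ((Xᴴ * X * S).trace.re * (Z * Zᴴ * T).trace.re) := by
    have h1 : X * Y * Z = (X * A) * (B * Z) := by
      rw [← hAB]; simp only [Matrix.mul_assoc]
    have h2 := trace_cauchy_schwarz (X * A) (B * Z)
    rw [← h1] at h2
    have h3 : ((X * A) * (X * A)ᴴ).trace = (Xᴴ * X * S).trace := by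
      have : (X * A) * (X * A)ᴴ = X * S * Xᴴ := by
        rw [← hAA]
        simp only [Matrix.conjTranspose_mul, Matrix.mul_assoc]
      rw [this, Matrix.trace_mul_cycle]
    have h4 : ((B * Z)ᴴ * (B * Z)).trace = (Z * Zᴴ * T).trace := by
      have : (B * Z)ᴴ * (B * Z) = Zᴴ * T * Z := by
        rw [← hBB]
        simp only [Matrix.conjTranspose_mul, Matrix.mul_assoc]
      rw [this, Matrix.trace_mul_cycle]
    rwa [h3, h4] at h2
  have hr : (0:ℝ) ≤ (N : ℝ)⁻¹ := by positivity
  have hnorm : ‖ntr (X * Y * Z)‖ = (N : ℝ)⁻¹ * ‖(X * Y * Z).trace‖ := by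
    rw [ntr, norm_mul]
    congr 1
    rw [show ((N : ℂ))⁻¹ = (((N : ℝ)⁻¹ : ℝ) : ℂ) by push_cast; ring]
    rw [Complex.norm_real, Real.norm_eq_abs, abs_of_nonneg hr]
  have hre : ∀ M : Matrix (Fin N) (Fin N) ℂ, (ntr M).re = (N : ℝ)⁻¹ * M.trace.re := by
    intro M
    rw [ntr, show ((N : ℂ))⁻¹ = (((N : ℝ)⁻¹ : ℝ) : ℂ) by push_cast; ring,
      Complex.re_ofReal_mul]
  rw [hnorm, hre, hre]
  calc (N : ℝ)⁻¹ * ‖(X * Y * Z).trace‖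
      ≤ (N : ℝ)⁻¹ * Real.sqrt ((Xᴴ * X * S).trace.re * (Z * Zᴴ * T).trace.re) :=
        mul_le_mul_of_nonneg_left key hr
    _ = Real.sqrt ((N : ℝ)⁻¹ * (Xᴴ * X * S).trace.re * ((N : ℝ)⁻¹ * (Z * Zᴴ * T).trace.re)) := by
        rw [show (N : ℝ)⁻¹ * (Xᴴ * X * S).trace.re * ((N : ℝ)⁻¹ * (Z * Zᴴ * T).trace.re)
            = ((N : ℝ)⁻¹)^2 * ((Xᴴ * X * S).trace.re * (Z * Zᴴ * T).trace.re) by ring,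
          Real.sqrt_mul (sq_nonneg _), Real.sqrt_sq hr]

end
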